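/- Let d ∈ {2,3}, ρ > 0, h > 0, a > 0, ε > 0 with ε²a² < h, and let v, H ∈ ℝ^d with ε²|v|² < 1. Then the (2d+2)×(2d+2) matrix A₀(U) := 𝐉ᵀ B₀(V) 𝐉 is symmetric positive definite. -/

import Mathlib

open Matrix

/-- The Lorentz factor `Γ = (1 − ε²|v|²)^{−1/2}`. -/
noncomputable def lorentz (d : ℕ) (ε : ℝ) (v : Fin d → ℝ) : ℝ :=
  (Real.sqrt (1 - ε ^ 2 * ∑ i, v i ^ 2))⁻¹

/-- `|b|² = ε²Γ⁻²|H|² + ε⁴(v·H)²`, the Minkowski norm squared of the magnetic field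
`d`-vector. -/
noncomputable def bsq (d : ℕ) (ε : ℝ) (v H : Fin d → ℝ) : ℝ :=
  ε ^ 2 * (lorentz d ε v)⁻¹ ^ 2 * (∑ i, H i ^ 2) + ε ^ 4 * (∑ i, v i * H i) ^ 2

/-- `M₀ = Γ⁻¹(I_d + ε²Γ² v⊗v)`. -/
noncomputable def M0rel (d : ℕ) (ε : ℝ) (v : Fin d → ℝ) : Matrix (Fin d) (Fin d) ℝ :=
  (lorentz d ε v)⁻¹ • ((1 : Matrix (Fin d) (Fin d) ℝ)
    + (ε ^ 2 * lorentz d ε v ^ 2) • vecMulVec v v)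

/-- `𝒜₀`, the velocity block of the relativistic MHD symmetrizer `B₀(V)`. -/
noncomputable def calA0 (d : ℕ) (ε ρ h : ℝ) (v H : Fin d → ℝ) :
    Matrix (Fin d) (Fin d) ℝ :=
  (ρ * h * lorentz d ε v + ε ^ 2 * (lorentz d ε v)⁻¹ * ∑ i, H i ^ 2) •
      ((1 : Matrix (Fin d) (Fin d) ℝ) - ε ^ 2 • vecMulVec v v)
    - (ε ^ 2 * (lorentz d ε v)⁻¹ * bsq d ε v H) • vecMulVec v v
    - (ε ^ 2 * (lorentz d ε v)⁻¹) • vecMulVec H H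
    + (ε ^ 4 * (lorentz d ε v)⁻¹ * ∑ i, v i * H i) • (vecMulVec H v + vecMulVec v H)

/-- `𝒜ᵢ`, the velocity block of `Bᵢ(V)`, `i = 1, …, d`. -/
noncomputable def calAi (d : ℕ) (ε ρ h : ℝ) (v H : Fin d → ℝ) (i : Fin d) :
    Matrix (Fin d) (Fin d) ℝ :=
  v i • ((ρ * h * lorentz d ε v + ε ^ 2 * (lorentz d ε v)⁻¹ * ∑ j, H j ^ 2) •
        ((1 : Matrix (Fin d) (Fin d) ℝ) - ε ^ 2 • vecMulVec v v)
      + (ε ^ 2 * (lorentz d ε v)⁻¹) • (bsq d ε v H • vecMulVec v v - vecMulVec H H))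
    + (ε ^ 2 * (lorentz d ε v)⁻¹ * H i) •
        (((lorentz d ε v)⁻¹ ^ 2) • (vecMulVec H v + vecMulVec v H)
          - (2 * ∑ j, v j * H j) •
              ((1 : Matrix (Fin d) (Fin d) ℝ) - ε ^ 2 • vecMulVec v v))
    + (lorentz d ε v)⁻¹ •
        vecMulVec ((ε ^ 2 * ∑ j, v j * H j) • H - bsq d ε v H • v) (Pi.single i 1)
    + (lorentz d ε v)⁻¹ •
        vecMulVec (Pi.single i 1) ((ε ^ 2 * ∑ j, v j * H j) • H - bsq d ε v H • v)

/-- `𝒩ᵢ = (Γ⁻²H + ε²(v·H)v)⊗(eᵢ − ε²vᵢv) − Γ⁻²Hᵢ I_d`. -/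
noncomputable def calNi (d : ℕ) (ε : ℝ) (v H : Fin d → ℝ) (i : Fin d) :
    Matrix (Fin d) (Fin d) ℝ :=
  vecMulVec (((lorentz d ε v)⁻¹ ^ 2) • H + (ε ^ 2 * ∑ j, v j * H j) • v)
      (Pi.single i 1 - (ε ^ 2 * v i) • v)
    - ((lorentz d ε v)⁻¹ ^ 2 * H i) • (1 : Matrix (Fin d) (Fin d) ℝ)

/-- Index type for the `(2d+2) × (2d+2)` matrices of the symmetrized ideal relativistic MHD
system, blocks of sizes `1, d, d, 1`. -/
abbrev RMHDIdx (d : ℕ) := Unit ⊕ Fin d ⊕ Fin d ⊕ Unit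

/-- The symmetrizer `B₀(V)` of ideal relativistic MHD. -/
noncomputable def B0mat (d : ℕ) (ε ρ h a : ℝ) (v H : Fin d → ℝ) :
    Matrix (RMHDIdx d) (RMHDIdx d) ℝ :=
  Matrix.of fun p q =>
    match p, q with
    | Sum.inl _, Sum.inl _ => lorentz d ε v / (ρ * a ^ 2)
    | Sum.inl _, Sum.inr (Sum.inl j) => ε ^ 2 * v j
    | Sum.inr (Sum.inl i), Sum.inl _ => ε ^ 2 * v i
    | Sum.inr (Sum.inl i), Sum.inr (Sum.inl j) => calA0 d ε ρ h v H i j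
    | Sum.inr (Sum.inr (Sum.inl i)), Sum.inr (Sum.inr (Sum.inl j)) => M0rel d ε v i j
    | Sum.inr (Sum.inr (Sum.inr _)), Sum.inr (Sum.inr (Sum.inr _)) => 1
    | _, _ => 0

/-- The matrices `Bᵢ(V)`, `i = 1, …, d`, of the symmetrized ideal relativistic MHD system. -/
noncomputable def Bimat (d : ℕ) (ε ρ h a : ℝ) (v H : Fin d → ℝ) (i : Fin d) :
    Matrix (RMHDIdx d) (RMHDIdx d) ℝ :=
  Matrix.of fun p q =>
    match p, q with
    | Sum.inl _, Sum.inl _ => lorentz d ε v * v i / (ρ * a ^ 2)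
    | Sum.inl _, Sum.inr (Sum.inl j) => if i = j then 1 else 0
    | Sum.inr (Sum.inl j), Sum.inl _ => if i = j then 1 else 0
    | Sum.inr (Sum.inl j), Sum.inr (Sum.inl k) => calAi d ε ρ h v H i j k
    | Sum.inr (Sum.inl j), Sum.inr (Sum.inr (Sum.inl k)) => calNi d ε v H i k j
    | Sum.inr (Sum.inr (Sum.inl j)), Sum.inr (Sum.inl k) => calNi d ε v H i j k
    | Sum.inr (Sum.inr (Sum.inl j)), Sum.inr (Sum.inr (Sum.inl k)) => v i * M0rel d ε v j k
    | Sum.inr (Sum.inr (Sum.inr _)), Sum.inr (Sum.inr (Sum.inr _)) => v i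
    | _, _ => 0

/-- The Jacobian `𝐉 = ∂V/∂U` of the change of unknowns `U = (q, v, H, S) ↦ V = (p, w, H, S)`
in ideal relativistic MHD, with `𝐚 = ε²(|H|²v − (v·H)H)` and `𝐛 = Γ⁻²H + ε²(v·H)v`. -/
noncomputable def Jac (d : ℕ) (ε : ℝ) (v H : Fin d → ℝ) :
    Matrix (RMHDIdx d) (RMHDIdx d) ℝ :=
  Matrix.of fun p q =>
    match p, q with
    | Sum.inl _, Sum.inl _ => 1
    | Sum.inl _, Sum.inr (Sum.inl j) =>
        ε ^ 2 * ((∑ k, H k ^ 2) * v j - (∑ k, v k * H k) * H j)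
    | Sum.inl _, Sum.inr (Sum.inr (Sum.inl j)) =>
        -((lorentz d ε v)⁻¹ ^ 2 * H j + ε ^ 2 * (∑ k, v k * H k) * v j)
    | Sum.inr (Sum.inl i), Sum.inr (Sum.inl j) => lorentz d ε v ^ 2 * M0rel d ε v i j
    | Sum.inr (Sum.inr (Sum.inl i)), Sum.inr (Sum.inr (Sum.inl j)) => if i = j then 1 else 0
    | Sum.inr (Sum.inr (Sum.inr _)), Sum.inr (Sum.inr (Sum.inr _)) => 1
    | _, _ => 0


section Aux

set_option maxHeartbeats 1000000

lemma vmv_mulVec {d : ℕ} (a b y : Fin d → ℝ) :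
    vecMulVec a b *ᵥ y = (b ⬝ᵥ y) • a := by
  ext i
  simp [Matrix.mulVec, Matrix.vecMulVec_apply, dotProduct, Finset.sum_mul,
    Finset.mul_sum, mul_assoc, mul_comm, mul_left_comm]

lemma qf_M0 {d : ℕ} (ε : ℝ) (v y : Fin d → ℝ) :
    y ⬝ᵥ (M0rel d ε v *ᵥ y) =
      (lorentz d ε v)⁻¹ * ((∑ i, y i ^ 2) + ε ^ 2 * lorentz d ε v ^ 2 * (v ⬝ᵥ y) ^ 2) := by
  simp only [M0rel, Matrix.smul_mulVec, Matrix.add_mulVec, Matrix.one_mulVec,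
    vmv_mulVec, dotProduct_smul, dotProduct_add, smul_eq_mul]
  have h1 : y ⬝ᵥ y = ∑ i, y i ^ 2 := by simp [dotProduct, pow_two]
  have h2 : y ⬝ᵥ v = v ⬝ᵥ y := dotProduct_comm _ _
  rw [h1, h2]; ring

lemma qf_calA0 {d : ℕ} (ε ρ h : ℝ) (v H y : Fin d → ℝ) :
    y ⬝ᵥ (calA0 d ε ρ h v H *ᵥ y) =
      (ρ * h * lorentz d ε v + ε ^ 2 * (lorentz d ε v)⁻¹ * ∑ i, H i ^ 2) *
          ((∑ i, y i ^ 2) - ε ^ 2 * (v ⬝ᵥ y) ^ 2)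
        - ε ^ 2 * (lorentz d ε v)⁻¹ * bsq d ε v H * (v ⬝ᵥ y) ^ 2
        - ε ^ 2 * (lorentz d ε v)⁻¹ * (H ⬝ᵥ y) ^ 2
        + ε ^ 4 * (lorentz d ε v)⁻¹ * (∑ i, v i * H i) * (2 * (H ⬝ᵥ y) * (v ⬝ᵥ y)) := by
  simp only [calA0, Matrix.smul_mulVec, Matrix.add_mulVec, Matrix.sub_mulVec,
    Matrix.one_mulVec, vmv_mulVec, dotProduct_smul, dotProduct_add, dotProduct_sub,
    smul_eq_mul]
  have h1 : y ⬝ᵥ y = ∑ i, y i ^ 2 := by simp [dotProduct, pow_two]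
  have h2 : y ⬝ᵥ v = v ⬝ᵥ y := dotProduct_comm _ _
  have h3 : y ⬝ᵥ H = H ⬝ᵥ y := dotProduct_comm _ _
  rw [h1, h2, h3]; ring

lemma qf_B0 (d : ℕ) (ε ρ h a : ℝ) (v H : Fin d → ℝ) (x : RMHDIdx d → ℝ) :
    x ⬝ᵥ (B0mat d ε ρ h a v H *ᵥ x) =
      lorentz d ε v / (ρ * a ^ 2) * (x (Sum.inl ())) ^ 2
        + 2 * ε ^ 2 * x (Sum.inl ()) * (v ⬝ᵥ fun i => x (Sum.inr (Sum.inl i)))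
        + (fun i => x (Sum.inr (Sum.inl i))) ⬝ᵥ
            (calA0 d ε ρ h v H *ᵥ fun i => x (Sum.inr (Sum.inl i)))
        + (fun i => x (Sum.inr (Sum.inr (Sum.inl i)))) ⬝ᵥ
            (M0rel d ε v *ᵥ fun i => x (Sum.inr (Sum.inr (Sum.inl i))))
        + (x (Sum.inr (Sum.inr (Sum.inr ())))) ^ 2 := by
  simp only [dotProduct, Matrix.mulVec, B0mat, Matrix.of_apply,
    Fintype.sum_sum_type, Fintype.sum_unique, mul_add, add_mul, Finset.sum_add_distrib,
    Finset.mul_sum, mul_zero, zero_mul, Finset.sum_const_zero, add_zero, zero_add, mul_one]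
  rw [show (default : Unit) = () from rfl]
  have hc : (∑ i : Fin d, x (Sum.inr (Sum.inl i)) * (ε ^ 2 * v i * x (Sum.inl ())))
      = ∑ i : Fin d, ε ^ 2 * x (Sum.inl ()) * (v i * x (Sum.inr (Sum.inl i))) :=
    Finset.sum_congr rfl (by intros; ring)
  have hc' : (∑ i : Fin d, x (Sum.inl ()) * (ε ^ 2 * v i * x (Sum.inr (Sum.inl i))))
      = ∑ i : Fin d, ε ^ 2 * x (Sum.inl ()) * (v i * x (Sum.inr (Sum.inl i))) :=
    Finset.sum_congr rfl (by intros; ring)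
  have hc2 : (∑ i : Fin d, 2 * ε ^ 2 * x (Sum.inl ()) * (v i * x (Sum.inr (Sum.inl i))))
      = 2 * ∑ i : Fin d, ε ^ 2 * x (Sum.inl ()) * (v i * x (Sum.inr (Sum.inl i))) := by
    rw [Finset.mul_sum]; exact Finset.sum_congr rfl (by intros; ring)
  rw [hc, hc', hc2]; ring

lemma scalar_pos (ε ρ h a : ℝ) (hρ : 0 < ρ) (hh : 0 < h) (ha : 0 < a) (hε : 0 < ε)
    (hsub : ε ^ 2 * a ^ 2 < h)
    (vs ys Hs zs x0 w k m vz s I : ℝ)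
    (hys : 0 ≤ ys) (hzs : 0 ≤ zs)
    (hv : ε ^ 2 * vs < 1)
    (hI2 : I ^ 2 = 1 - ε ^ 2 * vs) (hI : 0 < I)
    (C1 : w ^ 2 ≤ vs * ys)
    (C2 : (k - ε ^ 2 * m * w) ^ 2 ≤ Hs * (ys - 2 * ε ^ 2 * w ^ 2 + ε ^ 4 * vs * w ^ 2))
    (C3 : vz ^ 2 ≤ vs * zs)
    (hne : ¬(x0 = 0 ∧ ys = 0 ∧ zs = 0 ∧ s = 0)) :
    0 < I⁻¹ / (ρ * a ^ 2) * x0 ^ 2 + 2 * ε ^ 2 * x0 * w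
      + ((ρ * h * I⁻¹ + ε ^ 2 * I * Hs) * (ys - ε ^ 2 * w ^ 2)
          - ε ^ 2 * I * (ε ^ 2 * I ^ 2 * Hs + ε ^ 4 * m ^ 2) * w ^ 2
          - ε ^ 2 * I * k ^ 2 + ε ^ 4 * I * m * (2 * k * w))
      + I * (zs + ε ^ 2 * (I⁻¹) ^ 2 * vz ^ 2) + s ^ 2 := by
  have hIne : I ≠ 0 := ne_of_gt hI
  have hR : (0:ℝ) < ρ * a ^ 2 := by positivity
  have hRne : ρ * a ^ 2 ≠ 0 := ne_of_gt hR
  have hT : 0 ≤ Hs * (ys - ε ^ 2 * w ^ 2) - (ε ^ 2 * I ^ 2 * Hs + ε ^ 4 * m ^ 2) * w ^ 2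
      - k ^ 2 + 2 * ε ^ 2 * m * k * w := by
    have h' : Hs * (ys - ε ^ 2 * w ^ 2) - (ε ^ 2 * I ^ 2 * Hs + ε ^ 4 * m ^ 2) * w ^ 2
        - k ^ 2 + 2 * ε ^ 2 * m * k * w
        = Hs * (ys - 2 * ε ^ 2 * w ^ 2 + ε ^ 4 * vs * w ^ 2) - (k - ε ^ 2 * m * w) ^ 2 := by
      rw [hI2]; ring
    rw [h']; linarith [C2]
  have hsmall : ε ^ 4 * a ^ 2 * vs < h := by nlinarith [sq_nonneg (ε * a), sq_nonneg ε]
  set Q := I⁻¹ / (ρ * a ^ 2) * x0 ^ 2 + 2 * ε ^ 2 * x0 * w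
      + ((ρ * h * I⁻¹ + ε ^ 2 * I * Hs) * (ys - ε ^ 2 * w ^ 2)
          - ε ^ 2 * I * (ε ^ 2 * I ^ 2 * Hs + ε ^ 4 * m ^ 2) * w ^ 2
          - ε ^ 2 * I * k ^ 2 + ε ^ 4 * I * m * (2 * k * w))
      + I * (zs + ε ^ 2 * (I⁻¹) ^ 2 * vz ^ 2) + s ^ 2 with hQ
  have expand : Q * ((ρ * a ^ 2) * I)
      = x0 ^ 2 + 2 * ε ^ 2 * (ρ * a ^ 2) * I * x0 * w
        + ρ * h * (ρ * a ^ 2) * (ys - ε ^ 2 * w ^ 2)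
        + ε ^ 2 * (ρ * a ^ 2) * I ^ 2 *
            (Hs * (ys - ε ^ 2 * w ^ 2) - (ε ^ 2 * I ^ 2 * Hs + ε ^ 4 * m ^ 2) * w ^ 2
              - k ^ 2 + 2 * ε ^ 2 * m * k * w)
        + (ρ * a ^ 2) * I ^ 2 * zs + ε ^ 2 * (ρ * a ^ 2) * vz ^ 2
        + (ρ * a ^ 2) * I * s ^ 2 := by
    rw [hQ]; field_simp; ring
  have hw2 : ε ^ 2 * w ^ 2 ≤ ε ^ 2 * vs * ys := by
    have := mul_le_mul_of_nonneg_left C1 (sq_nonneg ε); linarith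
  have hQRI : 0 < Q * ((ρ * a ^ 2) * I) := by
    rw [expand]
    clear expand hQ
    have hε2 : (0:ℝ) < ε ^ 2 := by positivity
    rcases eq_or_lt_of_le hys with hys0 | hyspos
    · -- ys = 0 : then w = 0, k = 0
      subst hys0
      have hw : w = 0 := by
        have h1 : w ^ 2 ≤ 0 := by nlinarith [C1]
        have h2 : w ^ 2 = 0 := le_antisymm h1 (sq_nonneg w)
        exact pow_eq_zero_iff two_ne_zero |>.mp h2
      subst hw
      have hk : k = 0 := by
        have h1 : k ^ 2 ≤ 0 := by nlinarith [C2]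
        have h2 : k ^ 2 = 0 := le_antisymm h1 (sq_nonneg k)
        exact pow_eq_zero_iff two_ne_zero |>.mp h2
      subst hk
      ring_nf
      have hzsn : 0 ≤ ρ * a ^ 2 * I ^ 2 * zs := by positivity
      have hvzn : 0 ≤ ε ^ 2 * (ρ * a ^ 2) * vz ^ 2 := by positivity
      have hsn : 0 ≤ ρ * a ^ 2 * I * s ^ 2 := by positivity
      rcases eq_or_lt_of_le hzs with hzs0 | hzspos
      · subst hzs0
        have hvz : vz = 0 := by
          have h1 : vz ^ 2 ≤ 0 := by nlinarith [C3]
          have h2 : vz ^ 2 = 0 := le_antisymm h1 (sq_nonneg vz)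
          exact pow_eq_zero_iff two_ne_zero |>.mp h2
        subst hvz
        have hx0s : x0 ≠ 0 ∨ s ≠ 0 := by
          by_contra hcon
          push_neg at hcon
          exact hne ⟨hcon.1, rfl, rfl, hcon.2⟩
        rcases hx0s with hx0 | hs
        · have hp : 0 < x0 ^ 2 := by positivity
          nlinarith [hp, hsn]
        · have hp : 0 < ρ * a ^ 2 * I * s ^ 2 := by positivity
          nlinarith [hp, sq_nonneg x0]
      · have hp : 0 < ρ * a ^ 2 * I ^ 2 * zs := by positivity
        nlinarith [hp, sq_nonneg x0, hvzn, hsn]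
    · -- ys > 0
      have h1mv : (0:ℝ) < 1 - ε ^ 2 * vs := by linarith
      have key : 0 < ρ * h * (ρ * a ^ 2) * (ys - ε ^ 2 * w ^ 2)
          - ε ^ 4 * (ρ * a ^ 2) ^ 2 * I ^ 2 * w ^ 2 := by
        have e2 : I ^ 2 * w ^ 2 ≤ (1 - ε ^ 2 * vs) * (vs * ys) := by
          rw [hI2]
          exact mul_le_mul_of_nonneg_left C1 (le_of_lt h1mv)
        have e1 : ρ * h * (ρ * a ^ 2) * ((1 - ε ^ 2 * vs) * ys)
            ≤ ρ * h * (ρ * a ^ 2) * (ys - ε ^ 2 * w ^ 2) := by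
          apply mul_le_mul_of_nonneg_left _ (by positivity : (0:ℝ) ≤ ρ * h * (ρ * a ^ 2))
          nlinarith [hw2]
        have e3 : ε ^ 4 * (ρ * a ^ 2) ^ 2 * (I ^ 2 * w ^ 2)
            ≤ ε ^ 4 * (ρ * a ^ 2) ^ 2 * ((1 - ε ^ 2 * vs) * (vs * ys)) :=
          mul_le_mul_of_nonneg_left e2 (by positivity)
        have e4 : ρ * h * (ρ * a ^ 2) * ((1 - ε ^ 2 * vs) * ys)
              - ε ^ 4 * (ρ * a ^ 2) ^ 2 * ((1 - ε ^ 2 * vs) * (vs * ys))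
            = (ρ * a ^ 2) * (1 - ε ^ 2 * vs) * ys * (ρ * (h - ε ^ 4 * a ^ 2 * vs)) := by
          ring
        have e5 : 0 < (ρ * a ^ 2) * (1 - ε ^ 2 * vs) * ys * (ρ * (h - ε ^ 4 * a ^ 2 * vs)) := by
          apply mul_pos (mul_pos (mul_pos hR h1mv) hyspos)
          apply mul_pos hρ
          linarith
        nlinarith [e1, e3, e4, e5]
      have n1 : 0 ≤ ε ^ 2 * (ρ * a ^ 2) * I ^ 2 *
          (Hs * (ys - ε ^ 2 * w ^ 2) - (ε ^ 2 * I ^ 2 * Hs + ε ^ 4 * m ^ 2) * w ^ 2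
            - k ^ 2 + 2 * ε ^ 2 * m * k * w) :=
        mul_nonneg (by positivity) hT
      have n2 : 0 ≤ ρ * a ^ 2 * I ^ 2 * zs := by positivity
      have n3 : 0 ≤ ε ^ 2 * (ρ * a ^ 2) * vz ^ 2 := by positivity
      have n4 : 0 ≤ ρ * a ^ 2 * I * s ^ 2 := by positivity
      nlinarith [sq_nonneg (x0 + ε ^ 2 * (ρ * a ^ 2) * I * w), key, n1, n2, n3, n4]
  clear expand
  nlinarith [hQRI, mul_pos hR hI]

lemma CS2 {d : ℕ} (ε W : ℝ) (v H y : Fin d → ℝ) (hW : W = v ⬝ᵥ y) :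
    (H ⬝ᵥ y - ε ^ 2 * (∑ i, v i * H i) * W) ^ 2
      ≤ (∑ i, H i ^ 2) *
          ((∑ i, y i ^ 2) - 2 * ε ^ 2 * W ^ 2 + ε ^ 4 * (∑ i, v i ^ 2) * W ^ 2) := by
  have hW' : (∑ i, v i * y i) = W := by rw [hW]; rfl
  have cs := Finset.sum_mul_sq_le_sq_mul_sq Finset.univ H (fun i => y i - ε ^ 2 * W * v i)
  have e1 : (∑ i, H i * (y i - ε ^ 2 * W * v i))
      = H ⬝ᵥ y - ε ^ 2 * (∑ i, v i * H i) * W := by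
    have : ∀ i ∈ Finset.univ, H i * (y i - ε ^ 2 * W * v i)
        = H i * y i - ε ^ 2 * W * (v i * H i) := fun i _ => by ring
    rw [Finset.sum_congr rfl this, Finset.sum_sub_distrib, ← Finset.mul_sum]
    have h2 : (∑ i, H i * y i) = H ⬝ᵥ y := rfl
    rw [h2]; ring
  have e2 : (∑ i, (y i - ε ^ 2 * W * v i) ^ 2)
      = (∑ i, y i ^ 2) - 2 * ε ^ 2 * W ^ 2 + ε ^ 4 * (∑ i, v i ^ 2) * W ^ 2 := by
    have : ∀ i ∈ Finset.univ, (y i - ε ^ 2 * W * v i) ^ 2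
        = y i ^ 2 - 2 * ε ^ 2 * W * (v i * y i) + ε ^ 4 * W ^ 2 * v i ^ 2 := fun i _ => by
      ring
    rw [Finset.sum_congr rfl this, Finset.sum_add_distrib, Finset.sum_sub_distrib,
      ← Finset.mul_sum, ← Finset.mul_sum, hW']
    ring
  calc (H ⬝ᵥ y - ε ^ 2 * (∑ i, v i * H i) * W) ^ 2
      = (∑ i, H i * (y i - ε ^ 2 * W * v i)) ^ 2 := by rw [e1]
    _ ≤ (∑ i, H i ^ 2) * (∑ i, (y i - ε ^ 2 * W * v i) ^ 2) := cs
    _ = _ := by rw [e2]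

lemma B0_pos (d : ℕ) (ρ h a ε : ℝ) (hρ : 0 < ρ) (hh : 0 < h) (ha : 0 < a) (hε : 0 < ε)
    (hsub : ε ^ 2 * a ^ 2 < h) (v H : Fin d → ℝ) (hv : ε ^ 2 * ∑ i, v i ^ 2 < 1)
    (x : RMHDIdx d → ℝ) (hx : x ≠ 0) :
    0 < x ⬝ᵥ (B0mat d ε ρ h a v H *ᵥ x) := by
  have hS : (0:ℝ) < 1 - ε ^ 2 * ∑ i, v i ^ 2 := by linarith
  have hIrw : (lorentz d ε v)⁻¹ = Real.sqrt (1 - ε ^ 2 * ∑ i, v i ^ 2) := by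
    rw [lorentz, inv_inv]
  have hI : 0 < Real.sqrt (1 - ε ^ 2 * ∑ i, v i ^ 2) := Real.sqrt_pos.mpr hS
  have hI2 : (Real.sqrt (1 - ε ^ 2 * ∑ i, v i ^ 2)) ^ 2 = 1 - ε ^ 2 * ∑ i, v i ^ 2 :=
    Real.sq_sqrt hS.le
  have hys : 0 ≤ ∑ i, (x (Sum.inr (Sum.inl i))) ^ 2 :=
    Finset.sum_nonneg fun i _ => sq_nonneg _
  have hzs : 0 ≤ ∑ i, (x (Sum.inr (Sum.inr (Sum.inl i)))) ^ 2 :=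
    Finset.sum_nonneg fun i _ => sq_nonneg _
  have C1 : (v ⬝ᵥ fun i => x (Sum.inr (Sum.inl i))) ^ 2
      ≤ (∑ i, v i ^ 2) * (∑ i, (x (Sum.inr (Sum.inl i))) ^ 2) := by
    simpa [dotProduct] using
      Finset.sum_mul_sq_le_sq_mul_sq Finset.univ v (fun i => x (Sum.inr (Sum.inl i)))
  have C3 : (v ⬝ᵥ fun i => x (Sum.inr (Sum.inr (Sum.inl i)))) ^ 2
      ≤ (∑ i, v i ^ 2) * (∑ i, (x (Sum.inr (Sum.inr (Sum.inl i)))) ^ 2) := by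
    simpa [dotProduct] using
      Finset.sum_mul_sq_le_sq_mul_sq Finset.univ v (fun i => x (Sum.inr (Sum.inr (Sum.inl i))))
  have C2 := CS2 ε (v ⬝ᵥ fun i => x (Sum.inr (Sum.inl i))) v H
    (fun i => x (Sum.inr (Sum.inl i))) rfl
  have hne : ¬(x (Sum.inl ()) = 0 ∧ (∑ i, (x (Sum.inr (Sum.inl i))) ^ 2) = 0
      ∧ (∑ i, (x (Sum.inr (Sum.inr (Sum.inl i)))) ^ 2) = 0
      ∧ x (Sum.inr (Sum.inr (Sum.inr ()))) = 0) := by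
    rintro ⟨h1, h2, h3, h4⟩
    apply hx
    have hy0 : ∀ i, x (Sum.inr (Sum.inl i)) = 0 := by
      intro i
      have := (Finset.sum_eq_zero_iff_of_nonneg
        (fun j (_ : j ∈ Finset.univ) => sq_nonneg (x (Sum.inr (Sum.inl j))))).mp h2 i
        (Finset.mem_univ i)
      exact pow_eq_zero_iff two_ne_zero |>.mp this
    have hz0 : ∀ i, x (Sum.inr (Sum.inr (Sum.inl i))) = 0 := by
      intro i
      have := (Finset.sum_eq_zero_iff_of_nonneg
        (fun j (_ : j ∈ Finset.univ) => sq_nonneg (x (Sum.inr (Sum.inr (Sum.inl j)))))).mp h3 i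
        (Finset.mem_univ i)
      exact pow_eq_zero_iff two_ne_zero |>.mp this
    funext p
    rcases p with u | i | i | u
    · cases u; exact h1
    · exact hy0 i
    · exact hz0 i
    · cases u; exact h4
  have main := scalar_pos ε ρ h a hρ hh ha hε hsub
    (∑ i, v i ^ 2) (∑ i, (x (Sum.inr (Sum.inl i))) ^ 2) (∑ i, H i ^ 2)
    (∑ i, (x (Sum.inr (Sum.inr (Sum.inl i)))) ^ 2)
    (x (Sum.inl ())) (v ⬝ᵥ fun i => x (Sum.inr (Sum.inl i)))
    (H ⬝ᵥ fun i => x (Sum.inr (Sum.inl i))) (∑ i, v i * H i)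
    (v ⬝ᵥ fun i => x (Sum.inr (Sum.inr (Sum.inl i))))
    (x (Sum.inr (Sum.inr (Sum.inr ()))))
    (Real.sqrt (1 - ε ^ 2 * ∑ i, v i ^ 2))
    hys hzs hv hI2 hI C1 C2 C3 hne
  rw [qf_B0, qf_calA0, qf_M0]
  simp only [bsq, hIrw]
  rw [show lorentz d ε v = (Real.sqrt (1 - ε ^ 2 * ∑ i, v i ^ 2))⁻¹ from by
    rw [← hIrw, inv_inv]]
  linarith [main]

lemma B0_symm (d : ℕ) (ε ρ h a : ℝ) (v H : Fin d → ℝ) :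
    (B0mat d ε ρ h a v H)ᵀ = B0mat d ε ρ h a v H := by
  have hA : ∀ i j, calA0 d ε ρ h v H j i = calA0 d ε ρ h v H i j := by
    intro i j
    simp only [calA0, Matrix.sub_apply, Matrix.add_apply, Matrix.smul_apply,
      Matrix.one_apply, Matrix.vecMulVec_apply, smul_eq_mul]
    rcases eq_or_ne i j with rfl | hij
    · ring
    · simp [hij, Ne.symm hij]; ring
  have hM : ∀ i j, M0rel d ε v j i = M0rel d ε v i j := by
    intro i j
    simp only [M0rel, Matrix.add_apply, Matrix.smul_apply, Matrix.one_apply,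
      Matrix.vecMulVec_apply, smul_eq_mul]
    rcases eq_or_ne i j with rfl | hij
    · ring
    · simp [hij, Ne.symm hij, mul_comm]
  ext p q
  rcases p with u | i | i | u <;> rcases q with u' | j | j | u' <;>
    simp [B0mat, Matrix.transpose_apply, hA, hM]

lemma Jac_inj (d : ℕ) (ε : ℝ) (v H : Fin d → ℝ) (hε : 0 < ε)
    (hv : ε ^ 2 * ∑ i, v i ^ 2 < 1) (x : RMHDIdx d → ℝ)
    (hJx : Jac d ε v H *ᵥ x = 0) : x = 0 := by
  have hS : (0:ℝ) < 1 - ε ^ 2 * ∑ i, v i ^ 2 := by linarith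
  have hL : 0 < lorentz d ε v := by
    rw [lorentz]; exact inv_pos.mpr (Real.sqrt_pos.mpr hS)
  have hz0 : ∀ i, x (Sum.inr (Sum.inr (Sum.inl i))) = 0 := by
    intro i
    have := congrFun hJx (Sum.inr (Sum.inr (Sum.inl i)))
    simpa [Matrix.mulVec, dotProduct, Jac, Fintype.sum_sum_type,
      Fintype.sum_unique] using this
  have hs0 : x (Sum.inr (Sum.inr (Sum.inr ()))) = 0 := by
    have := congrFun hJx (Sum.inr (Sum.inr (Sum.inr ())))
    simpa [Matrix.mulVec, dotProduct, Jac, Fintype.sum_sum_type,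
      Fintype.sum_unique] using this
  have hMy : M0rel d ε v *ᵥ (fun i => x (Sum.inr (Sum.inl i))) = 0 := by
    funext i
    have h0 := congrFun hJx (Sum.inr (Sum.inl i))
    simp only [Matrix.mulVec, dotProduct, Jac, Matrix.of_apply,
      Fintype.sum_sum_type, Fintype.sum_unique, mul_zero, zero_mul,
      Finset.sum_const_zero, add_zero, zero_add, Pi.zero_apply] at h0
    have h1 : lorentz d ε v ^ 2 *
        (∑ j, M0rel d ε v i j * x (Sum.inr (Sum.inl j))) = 0 := by
      rw [Finset.mul_sum]
      rw [Finset.sum_congr rfl (fun j (_ : j ∈ Finset.univ) => by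
        rw [← mul_assoc] : ∀ j ∈ Finset.univ, lorentz d ε v ^ 2 *
          (M0rel d ε v i j * x (Sum.inr (Sum.inl j)))
          = lorentz d ε v ^ 2 * M0rel d ε v i j * x (Sum.inr (Sum.inl j)))]
      exact h0
    have h2 := mul_eq_zero.mp h1
    rcases h2 with h2 | h2
    · exact absurd h2 (by positivity)
    · simpa [Matrix.mulVec, dotProduct] using h2
  have hy0 : ∀ i, x (Sum.inr (Sum.inl i)) = 0 := by
    have hq : (fun i => x (Sum.inr (Sum.inl i))) ⬝ᵥ
        (M0rel d ε v *ᵥ fun i => x (Sum.inr (Sum.inl i))) = 0 := by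
      rw [hMy]; simp
    rw [qf_M0] at hq
    have hInv : 0 < (lorentz d ε v)⁻¹ := inv_pos.mpr hL
    have hsum : (∑ i, (x (Sum.inr (Sum.inl i))) ^ 2)
        + ε ^ 2 * lorentz d ε v ^ 2 *
          (v ⬝ᵥ fun i => x (Sum.inr (Sum.inl i))) ^ 2 = 0 := by
      rcases mul_eq_zero.mp hq with hcon | hok
      · exact absurd hcon (ne_of_gt hInv)
      · exact hok
    have h1 : (∑ i, (x (Sum.inr (Sum.inl i))) ^ 2) = 0 := by
      have n1 : 0 ≤ ∑ i, (x (Sum.inr (Sum.inl i))) ^ 2 :=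
        Finset.sum_nonneg fun i _ => sq_nonneg _
      have n2 : 0 ≤ ε ^ 2 * lorentz d ε v ^ 2 *
          (v ⬝ᵥ fun i => x (Sum.inr (Sum.inl i))) ^ 2 := by positivity
      linarith
    intro i
    have := (Finset.sum_eq_zero_iff_of_nonneg
      (fun j (_ : j ∈ Finset.univ) => sq_nonneg (x (Sum.inr (Sum.inl j))))).mp h1 i
      (Finset.mem_univ i)
    exact pow_eq_zero_iff two_ne_zero |>.mp this
  have hx0 : x (Sum.inl ()) = 0 := by
    have h0 := congrFun hJx (Sum.inl ())
    simp only [Matrix.mulVec, dotProduct, Jac, Matrix.of_apply,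
      Fintype.sum_sum_type, Fintype.sum_unique, mul_zero, zero_mul,
      Finset.sum_const_zero, add_zero, zero_add, Pi.zero_apply, one_mul] at h0
    simpa [hy0, hz0] using h0
  funext p
  rcases p with u | i | i | u
  · cases u; exact hx0
  · exact hy0 i
  · exact hz0 i
  · cases u; exact hs0

end Aux

/-- The matrix `A₀(U) = 𝐉ᵀ B₀(V) 𝐉` of ideal relativistic MHD in the primary unknowns
`U = (q, v, H, S)` is symmetric positive definite. -/
theorem stmt16 (d : ℕ) (hd : d = 2 ∨ d = 3) (ρ h a ε : ℝ)
    (hρ : 0 < ρ) (hh : 0 < h) (ha : 0 < a) (hε : 0 < ε) (hsub : ε ^ 2 * a ^ 2 < h)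
    (v H : Fin d → ℝ) (hv : ε ^ 2 * ∑ i, v i ^ 2 < 1) :
    ((Jac d ε v H)ᵀ * B0mat d ε ρ h a v H * Jac d ε v H).IsSymm ∧
    ((Jac d ε v H)ᵀ * B0mat d ε ρ h a v H * Jac d ε v H).PosDef := by
  have hBs := B0_symm d ε ρ h a v H
  have hsymm : ((Jac d ε v H)ᵀ * B0mat d ε ρ h a v H * Jac d ε v H).IsSymm := by
    show ((Jac d ε v H)ᵀ * B0mat d ε ρ h a v H * Jac d ε v H)ᵀ = _
    rw [Matrix.transpose_mul, Matrix.transpose_mul, Matrix.transpose_transpose, hBs,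
      Matrix.mul_assoc]
  refine ⟨hsymm, Matrix.posDef_iff_dotProduct_mulVec.mpr ⟨?_, ?_⟩⟩
  · rw [Matrix.IsHermitian, Matrix.conjTranspose_eq_transpose_of_trivial]
    exact hsymm
  · intro x hx
    have hstar : star x = x := funext fun i => star_trivial _
    rw [hstar, ← Matrix.mulVec_mulVec, ← Matrix.mulVec_mulVec,
      dotProduct_mulVec, Matrix.vecMul_transpose]
    have hJx : Jac d ε v H *ᵥ x ≠ 0 := by
      intro hcon
      exact hx (Jac_inj d ε v H hε hv x hcon)
    exact B0_pos d ρ h a ε hρ hh ha hε hsub v H hv _ hJx
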